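/- Let (X,d) be a compact metric space and let f be a conjugacy between the orbit closures (O̅(z),S) and (O̅(z'),S) of two Toeplitz sequences z, z' ∈ X^ℤ. Let (p_i) be a period structure of z. Then for every ε > 0 there is i₀ ∈ ℕ such that for all i ≥ i₀ and all k, k' ∈ ℤ: if z(k p_i + t) = z(k' p_i + t) for all 0 ≤ t < p_i, then d(f(z)(k p_i + s), f(z)(k' p_i + s)) < ε for all 0 ≤ s < p_i. -/

import Mathlib

open Filter Topology

section Defs

variable {X : Type*}

/-- The shift by `m`: `(shiftZ m z) n = z (n + m)`, so `shiftZ 1` is the left shift `S`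
and `shiftZ m = S^m`. -/
def shiftZ (m : ℤ) (z : ℤ → X) : ℤ → X := fun n => z (n + m)

/-- `Per_p(z)`: the set of positions `n` such that `z m = z n` for all `m ≡ n (mod p)`. -/
def PerSet (p : ℕ) (z : ℤ → X) : Set ℤ :=
  {n : ℤ | ∀ m : ℤ, (p : ℤ) ∣ m - n → z m = z n}

/-- `Per(z) = ⋃_{p ≥ 1} Per_p(z)`. -/
def PerFull (z : ℤ → X) : Set ℤ := {n : ℤ | ∃ p : ℕ, 1 ≤ p ∧ n ∈ PerSet p z}

/-- A Toeplitz sequence: every position is periodic. -/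
def IsToeplitz (z : ℤ → X) : Prop := ∀ n : ℤ, n ∈ PerFull z

/-- A non-periodic sequence: `S^m z ≠ z` for all `m ≠ 0`. -/
def NonPeriodicSeq (z : ℤ → X) : Prop := ∀ m : ℤ, m ≠ 0 → shiftZ m z ≠ z

/-- `u` and `v` have the same `p`-skeleton. -/
def SamePSkeleton (p : ℕ) (u v : ℤ → X) : Prop :=
  PerSet p u = PerSet p v ∧ ∀ n ∈ PerSet p u, u n = v n

/-- A period structure of a (non-periodic) Toeplitz sequence `z`. -/
def IsPeriodStructure (p : ℕ → ℕ) (z : ℤ → X) : Prop :=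
  (∀ i, 1 ≤ p i) ∧
  (∀ i q, 1 ≤ q → q < p i → PerSet q z ≠ PerSet (p i) z) ∧
  (∀ i, p i ∣ p (i + 1)) ∧
  (∀ n : ℤ, ∃ i, n ∈ PerSet (p i) z)

/-- A fast growing sequence of positive integers. -/
def FastGrowing (p : ℕ → ℕ) : Prop :=
  p 0 = 1 ∧ (∀ i, p i ∣ p (i + 1)) ∧ 3 ≤ p 1 ∧ ∀ i, 3 * p i ≤ p (i + 1)

/-- `oxDefined p i` is the set of positions of the Oxtoby sequence that are filled in
after step `i` of the inductive construction (step `i+1` fills, for each `k ≡ 0` or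
`-1 (mod p_{i+1}/p_i)`, the still-empty positions `J(i,k)` of the block
`[k p_i, (k+1) p_i)`). -/
def oxDefined (p : ℕ → ℕ) : ℕ → Set ℤ
  | 0 => ∅
  | i + 1 =>
      oxDefined p i ∪
        {n : ℤ | ∃ k : ℤ,
          (((p (i + 1) / p i : ℕ) : ℤ) ∣ k ∨ ((p (i + 1) / p i : ℕ) : ℤ) ∣ (k + 1)) ∧
          k * (p i : ℤ) ≤ n ∧ n < (k + 1) * (p i : ℤ) ∧ n ∉ oxDefined p i}

/-- `J(i,k)`: the set of positions in `[k p_i, (k+1) p_i)` still undefined after step `i`. -/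
def oxJ (p : ℕ → ℕ) (i : ℕ) (k : ℤ) : Set ℤ :=
  {n : ℤ | k * (p i : ℤ) ≤ n ∧ n < (k + 1) * (p i : ℤ) ∧ n ∉ oxDefined p i}

/-- The Oxtoby sequence `z((p_i),(x_i))`: position `n` receives the value `x_i` where `i`
is the first step after which `n` is defined. -/
noncomputable def oxtoby (p : ℕ → ℕ) (x : ℕ → X) : ℤ → X :=
  fun n => x (sInf {i : ℕ | n ∈ oxDefined p i})

/-- The reverse of a bi-infinite sequence: `x⁻¹(n) = x(-n)`. -/
def revSeq (z : ℤ → X) : ℤ → X := fun n => z (-n)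

/-- `[n0, n1]` is a maximal `p`-periodic block in `x`. -/
def IsMaxPeriodicBlock (p : ℕ) (x : ℤ → X) (n0 n1 : ℤ) : Prop :=
  n0 ≤ n1 ∧ Set.Icc n0 n1 ⊆ PerSet p x ∧
    ∀ n0' n1' : ℤ, n0' ≤ n0 → n1 ≤ n1' → Set.Icc n0' n1' ⊆ PerSet p x →
      n0' = n0 ∧ n1' = n1

variable [TopologicalSpace X]

/-- The orbit closure of `z` in `X^ℤ` with the product topology. -/
def orbitClosure (z : ℤ → X) : Set (ℤ → X) :=
  closure {y : ℤ → X | ∃ m : ℤ, y = shiftZ m z}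

/-- The ω-limit set of a sequence: all limits of convergent subsequences. -/
def omegaLimitSet (x : ℕ → X) : Set X :=
  {a : X | ∃ φ : ℕ → ℕ, StrictMono φ ∧ Tendsto (x ∘ φ) atTop (𝓝 a)}

/-- Two sequences have the same topological type if exactly the same subsequences
converge. -/
def SameTopType {Y : Type*} [TopologicalSpace Y] (x : ℕ → X) (y : ℕ → Y) : Prop :=
  ∀ φ : ℕ → ℕ, StrictMono φ →
    ((∃ a, Tendsto (x ∘ φ) atTop (𝓝 a)) ↔ (∃ a, Tendsto (y ∘ φ) atTop (𝓝 a)))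

/-- `f` is a conjugacy between the shift-invariant sets `A` and `B`: a homeomorphism
from `A` onto `B` commuting with the shift. -/
def IsConjugacy (A B : Set (ℤ → X)) (f : (ℤ → X) → (ℤ → X)) : Prop :=
  Set.MapsTo f A B ∧ ContinuousOn f A ∧
    (∃ g : (ℤ → X) → (ℤ → X), Set.MapsTo g B A ∧ ContinuousOn g B ∧
      (∀ a ∈ A, g (f a) = a) ∧ (∀ b ∈ B, f (g b) = b)) ∧
    ∀ a ∈ A, f (shiftZ 1 a) = shiftZ 1 (f a)

/-- The `m`-th iterate (for `m : ℤ`) of a self-homeomorphism. -/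
def iterZ {Y : Type*} [TopologicalSpace Y] (f : Y ≃ₜ Y) (m : ℤ) (a : Y) : Y :=
  ((f.toEquiv ^ m : Equiv.Perm Y)) a

end Defs

section Aux

variable {X : Type*}

lemma shiftZ_shiftZ (a b : ℤ) (z : ℤ → X) : shiftZ a (shiftZ b z) = shiftZ (b + a) z := by
  funext n
  show z (n + a + b) = z (n + (b + a))
  congr 1; ring

lemma shiftZ_zero (z : ℤ → X) : shiftZ 0 z = z := by
  funext n; show z (n + 0) = z n; rw [add_zero]

lemma perSet_dvd_subset {q r : ℕ} (h : q ∣ r) (z : ℤ → X) : PerSet q z ⊆ PerSet r z := by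
  intro n hn m hm
  exact hn m (dvd_trans (Int.natCast_dvd_natCast.2 h) hm)

lemma ps_chain (p : ℕ → ℕ) (hdvd : ∀ i, p i ∣ p (i + 1)) :
    ∀ i j, i ≤ j → p i ∣ p j := by
  intro i j hij
  induction j, hij using Nat.le_induction with
  | base => exact dvd_rfl
  | succ j hj ih => exact ih.trans (hdvd j)

lemma ox_core (z : ℤ → X) (p : ℕ → ℕ)
    (hdvd : ∀ i, p i ∣ p (i + 1)) (hcov : ∀ n : ℤ, ∃ i, n ∈ PerSet (p i) z) :
    ∀ N : ℕ, ∃ I : ℕ, ∀ i, I ≤ i → ∀ k k' : ℤ,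
      (∀ t : ℤ, 0 ≤ t → t < (p i : ℤ) →
        z (k * (p i : ℤ) + t) = z (k' * (p i : ℤ) + t)) →
      ∀ m : ℤ, -(N : ℤ) ≤ m → m < (p i : ℤ) + N →
        z (k * (p i : ℤ) + m) = z (k' * (p i : ℤ) + m) := by
  intro N
  classical
  have hcmem : ∀ t : ℤ, t ∈ PerSet (p ((hcov t).choose)) z := fun t => (hcov t).choose_spec
  refine ⟨(Finset.Icc (-(N : ℤ)) (N : ℤ)).sup (fun t => (hcov t).choose), ?_⟩
  intro i hi k k' hblk m hm1 hm2
  have hN0 : (0 : ℤ) ≤ (N : ℤ) := Int.natCast_nonneg N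
  have hper : ∀ t : ℤ, -(N : ℤ) ≤ t → t ≤ (N : ℤ) → t ∈ PerSet (p i) z := by
    intro t h1 h2
    have ht : t ∈ Finset.Icc (-(N : ℤ)) (N : ℤ) := Finset.mem_Icc.2 ⟨h1, h2⟩
    have hle : (hcov t).choose ≤ i :=
      le_trans (Finset.le_sup (f := fun t => (hcov t).choose) ht) hi
    exact perSet_dvd_subset (ps_chain p hdvd _ _ hle) z (hcmem t)
  rcases lt_or_ge m 0 with hm0 | hm0
  · have hmem : m ∈ PerSet (p i) z := hper m hm1 (le_trans hm0.le hN0)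
    have h1 := hmem (k * (p i : ℤ) + m) ⟨k, by ring⟩
    have h2 := hmem (k' * (p i : ℤ) + m) ⟨k', by ring⟩
    rw [h1, h2]
  · rcases lt_or_ge m (p i : ℤ) with hmp | hmp
    · exact hblk m hm0 hmp
    · have hmem : (m - (p i : ℤ)) ∈ PerSet (p i) z :=
        hper _ (by linarith) (by linarith)
      have h1 := hmem (k * (p i : ℤ) + m) ⟨k + 1, by ring⟩
      have h2 := hmem (k' * (p i : ℤ) + m) ⟨k' + 1, by ring⟩
      rw [h1, h2]

lemma shiftZ_mem_orbitClosure [TopologicalSpace X] (z : ℤ → X) (m : ℤ) :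
    shiftZ m z ∈ orbitClosure z := subset_closure ⟨m, rfl⟩

lemma conj_shiftZ [TopologicalSpace X] (z : ℤ → X)
    (f : (ℤ → X) → (ℤ → X))
    (hcomm : ∀ a ∈ orbitClosure z, f (shiftZ 1 a) = shiftZ 1 (f a)) :
    ∀ m : ℤ, f (shiftZ m z) = shiftZ m (f z) := by
  have key : ∀ w : ℤ → X, shiftZ (-1) (shiftZ 1 w) = w := by
    intro w
    rw [shiftZ_shiftZ, show (1 : ℤ) + -1 = 0 from by ring, shiftZ_zero]
  intro m
  induction m using Int.induction_on with
  | zero => rw [shiftZ_zero, shiftZ_zero]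
  | succ i ih =>
      have h1 : shiftZ ((i : ℤ) + 1) z = shiftZ 1 (shiftZ (i : ℤ) z) :=
        (shiftZ_shiftZ 1 (i : ℤ) z).symm
      rw [h1, hcomm _ (shiftZ_mem_orbitClosure z (i : ℤ)), ih, shiftZ_shiftZ]
  | pred i ih =>
      have h := hcomm _ (shiftZ_mem_orbitClosure z (-(i : ℤ) - 1))
      rw [shiftZ_shiftZ, show (-(i : ℤ) - 1 + 1) = -(i : ℤ) from by ring, ih] at h
      have h2 := congrArg (shiftZ (-1)) h
      rw [key] at h2
      rw [← h2, shiftZ_shiftZ]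
      congr 1

end Aux

/-- Lemma `L2`: for a conjugacy `f` between Toeplitz systems and a period
structure `(p_i)` of `z`: for every `ε > 0` there is `i₀` such that for `i ≥ i₀`, equal
blocks `z[k p_i, (k+1) p_i) = z[k' p_i, (k'+1) p_i)` give
`d(f(z)(k p_i + s), f(z)(k' p_i + s)) < ε` for all `0 ≤ s < p_i`. -/
theorem conjugacy_equal_blocks_close {X : Type*} [MetricSpace X] [CompactSpace X]
    (z z' : ℤ → X) (hz : IsToeplitz z) (hz' : IsToeplitz z')
    (f : (ℤ → X) → (ℤ → X))
    (hf : IsConjugacy (orbitClosure z) (orbitClosure z') f)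
    (p : ℕ → ℕ) (hp : IsPeriodStructure p z) :
    ∀ ε : ℝ, 0 < ε → ∃ i₀ : ℕ, ∀ i : ℕ, i₀ ≤ i → ∀ k k' : ℤ,
      (∀ t : ℤ, 0 ≤ t → t < (p i : ℤ) →
        z (k * (p i : ℤ) + t) = z (k' * (p i : ℤ) + t)) →
      ∀ s : ℤ, 0 ≤ s → s < (p i : ℤ) →
        dist (f z (k * (p i : ℤ) + s)) (f z (k' * (p i : ℤ) + s)) < ε := by
  intro ε hε
  by_contra hcon
  push_neg at hcon
  choose i hi k k' hblk s hs0 hs1 hd using hcon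
  -- the shifted sequences
  set u : ℕ → (ℤ → X) := fun j => shiftZ (k j * (p (i j) : ℤ) + s j) z with hu_def
  set v : ℕ → (ℤ → X) := fun j => shiftZ (k' j * (p (i j) : ℤ) + s j) z with hv_def
  have hu : ∀ j, u j ∈ orbitClosure z := fun j => shiftZ_mem_orbitClosure z _
  have hv : ∀ j, v j ∈ orbitClosure z := fun j => shiftZ_mem_orbitClosure z _
  -- evaluation at 0 after applying f
  set g : (ℤ → X) → X := fun w => f w 0 with hg_def
  have hgc : ContinuousOn g (orbitClosure z) :=
    (continuous_apply (0 : ℤ)).comp_continuousOn hf.2.1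
  have hfc : ∀ m : ℤ, f (shiftZ m z) = shiftZ m (f z) := conj_shiftZ z f hf.2.2.2
  have hgu : ∀ j, g (u j) = f z (k j * (p (i j) : ℤ) + s j) := by
    intro j
    show f (shiftZ (k j * (p (i j) : ℤ) + s j) z) 0 = _
    rw [hfc]
    show f z (0 + (k j * (p (i j) : ℤ) + s j)) = _
    rw [zero_add]
  have hgv : ∀ j, g (v j) = f z (k' j * (p (i j) : ℤ) + s j) := by
    intro j
    show f (shiftZ (k' j * (p (i j) : ℤ) + s j) z) 0 = _
    rw [hfc]
    show f z (0 + (k' j * (p (i j) : ℤ) + s j)) = _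
    rw [zero_add]
  -- coordinatewise eventual equality
  have hco : ∀ n : ℤ, ∃ I : ℕ, ∀ j : ℕ, I ≤ j → u j n = v j n := by
    intro n
    obtain ⟨I, hI⟩ := ox_core z p hp.2.2.1 hp.2.2.2 n.natAbs
    refine ⟨I, fun j hj => ?_⟩
    have hij : I ≤ i j := le_trans hj (hi j)
    have h1 : (n : ℤ) ≤ (n.natAbs : ℤ) := Int.le_natAbs
    have h2 : -(n.natAbs : ℤ) ≤ n := by
      have := Int.le_natAbs (a := -n)
      rw [Int.natAbs_neg] at this
      linarith
    have hmain := hI (i j) hij (k j) (k' j) (hblk j) (n + s j)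
      (by linarith [hs0 j]) (by linarith [hs1 j])
    show z (n + (k j * (p (i j) : ℤ) + s j)) = z (n + (k' j * (p (i j) : ℤ) + s j))
    rw [show n + (k j * (p (i j) : ℤ) + s j) = k j * (p (i j) : ℤ) + (n + s j) from by ring,
      show n + (k' j * (p (i j) : ℤ) + s j) = k' j * (p (i j) : ℤ) + (n + s j) from by ring]
    exact hmain
  -- compactness: extract convergent subsequences
  have hAcomp : IsCompact (orbitClosure z) := isClosed_closure.isCompact
  obtain ⟨a, ha, φ, hφ, hua⟩ := hAcomp.tendsto_subseq hu
  obtain ⟨b, hb, ψ, hψ, hvb⟩ := hAcomp.tendsto_subseq (fun j => hv (φ j))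
  set σ : ℕ → ℕ := fun j => φ (ψ j) with hσ_def
  have hσmono : StrictMono σ := hφ.comp hψ
  have huσ : Tendsto (fun j => u (σ j)) atTop (𝓝 a) := hua.comp hψ.tendsto_atTop
  have hvσ : Tendsto (fun j => v (σ j)) atTop (𝓝 b) := hvb
  -- the limits agree
  have hab : a = b := by
    funext n
    have t1 : Tendsto (fun j => u (σ j) n) atTop (𝓝 (a n)) :=
      ((continuous_apply n).tendsto a).comp huσ
    have t2 : Tendsto (fun j => v (σ j) n) atTop (𝓝 (b n)) :=
      ((continuous_apply n).tendsto b).comp hvσ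
    obtain ⟨I, hI⟩ := hco n
    have t1' : Tendsto (fun j => v (σ j) n) atTop (𝓝 (a n)) := by
      refine t1.congr' ?_
      filter_upwards [eventually_ge_atTop I] with j hj
      exact hI (σ j) (le_trans hj (hσmono.le_apply))
    exact tendsto_nhds_unique t1' t2
  -- apply continuity of g
  have hga : Tendsto (fun j => g (u (σ j))) atTop (𝓝 (g a)) :=
    (hgc a ha).tendsto.comp
      (tendsto_nhdsWithin_of_tendsto_nhds_of_eventually_within _ huσ
        (Eventually.of_forall fun j => hu (σ j)))
  have hgb : Tendsto (fun j => g (v (σ j))) atTop (𝓝 (g b)) :=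
    (hgc b hb).tendsto.comp
      (tendsto_nhdsWithin_of_tendsto_nhds_of_eventually_within _ hvσ
        (Eventually.of_forall fun j => hv (σ j)))
  have hdist : Tendsto (fun j => dist (g (u (σ j))) (g (v (σ j)))) atTop
      (𝓝 (dist (g a) (g b))) := hga.dist hgb
  have hzero : dist (g a) (g b) = 0 := by rw [hab, dist_self]
  rw [hzero] at hdist
  have hle : ε ≤ 0 := by
    refine ge_of_tendsto hdist ?_
    filter_upwards with j
    rw [hgu (σ j), hgv (σ j)]
    exact hd (σ j)
  linarith
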